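/- Let D be an effective divisor on a metric graph Γ such that D is P-reduced for every point P ∈ Γ. Then |D| = {D}, i.e. D is the unique effective divisor in its linear equivalence class. -/
import Mathlib


open Set

noncomputable section

/-- `φ` parametrizes the set `U` as a star with `n` rays of length `ρ` centred at `P`,
isometrically for the path metric of the star: each ray is parametrized by arc length from
`P = φ k 0`, and two points on different rays are at distance the sum of their distances
to the centre `P`. -/
def IsStarMap {X : Type} [MetricSpace X] (φ : ℕ → ℝ → X) (U : Set X) (P : X)
    (n : ℕ) (ρ : ℝ) : Prop :=
  (∀ k < n, φ k 0 = P) ∧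
  (∀ k < n, ∀ s ∈ Icc (0:ℝ) ρ, ∀ t ∈ Icc (0:ℝ) ρ, dist (φ k s) (φ k t) = |s - t|) ∧
  (∀ k < n, ∀ l < n, k ≠ l → ∀ s ∈ Icc (0:ℝ) ρ, ∀ t ∈ Icc (0:ℝ) ρ,
    dist (φ k s) (φ l t) = s + t) ∧
  U = ⋃ k ∈ Finset.range n, φ k '' Icc (0:ℝ) ρ

/-- A metric graph: a compact connected metric space in which every point `P` has a
neighbourhood isometric to a star with `valence P ≥ 1` rays, `P` corresponding to the
centre of the star. -/
structure MetricGraph where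
  carrier : Type
  [ms : MetricSpace carrier]
  [cpt : CompactSpace carrier]
  [conn : ConnectedSpace carrier]
  [nem : Nonempty carrier]
  valence : carrier → ℕ
  valence_pos : ∀ P, 1 ≤ valence P
  isStar : ∀ P : carrier, ∃ ρ > (0:ℝ), ∃ U ∈ nhds P, ∃ φ, IsStarMap φ U P (valence P) ρ

attribute [instance] MetricGraph.ms MetricGraph.cpt MetricGraph.conn MetricGraph.nem

namespace MetricGraph

variable (Γ : MetricGraph)

/-- The vertices: the points of valence different from 2. -/
def vertexSet : Set Γ.carrier := {P | Γ.valence P ≠ 2}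

/-- The edges: the connected components of the complement of the vertex set. -/
def edgeSet : Set (Set Γ.carrier) :=
  {e | ∃ P, P ∉ Γ.vertexSet ∧ e = connectedComponentIn Γ.vertexSetᶜ P}

/-- The genus `g(Γ) = |E(Γ)| - |V(Γ)| + 1`. -/
def genus : ℤ := (Nat.card ↥Γ.edgeSet : ℤ) - (Nat.card ↥Γ.vertexSet : ℤ) + 1

/-- A divisor on `Γ`: a finite formal integer linear combination of points of `Γ`. -/
abbrev Divisor := Γ.carrier →₀ ℤ

variable {Γ}

/-- The degree of a divisor: the sum of its coefficients. -/
def deg (D : Γ.Divisor) : ℤ := D.sum fun _ n => n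

/-- A divisor is effective if all its coefficients are nonnegative. -/
def Effective (D : Γ.Divisor) : Prop := ∀ P, 0 ≤ D P

/-- `f` has (integer) slopes `s k` along the rays of some star neighbourhood of `P`:
`f` is affine with slope `s k` along the `k`-th direction emanating from `P`. -/
def HasSlopesAt (f : Γ.carrier → ℝ) (P : Γ.carrier) (s : ℕ → ℤ) : Prop :=
  ∃ ρ > (0:ℝ), ∃ U ∈ nhds P, ∃ φ, IsStarMap φ U P (Γ.valence P) ρ ∧
    ∀ k < Γ.valence P, ∀ t ∈ Icc (0:ℝ) ρ, f (φ k t) = f P + (s k : ℝ) * t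

/-- A rational function on `Γ`: a continuous function which is piecewise affine with
integer slopes, i.e. affine with integer slope along each direction emanating from any
point of `Γ`. -/
def IsRational (f : Γ.carrier → ℝ) : Prop :=
  Continuous f ∧ ∀ P, ∃ s : ℕ → ℤ, HasSlopesAt f P s

/-- The divisor of the rational function `f` has coefficient `d` at `P`: `d` is the sum
of the slopes of `f` in all directions emanating from `P`. -/
def DivAt (f : Γ.carrier → ℝ) (P : Γ.carrier) (d : ℤ) : Prop :=
  ∃ s : ℕ → ℤ, HasSlopesAt f P s ∧ d = ∑ k ∈ Finset.range (Γ.valence P), s k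

/-- Two divisors are linearly equivalent if their difference is the divisor of a
rational function. -/
def LinEquiv (D₁ D₂ : Γ.Divisor) : Prop :=
  ∃ f : Γ.carrier → ℝ, IsRational f ∧ ∀ P, DivAt f P (D₂ P - D₁ P)

/-- The linear system of `D`: all effective divisors linearly equivalent to `D`. -/
def linSys (D : Γ.Divisor) : Set Γ.Divisor :=
  {D' | Effective D' ∧ LinEquiv D D'}

/-- The rank of a divisor: `-1` if `|D| = ∅`, and otherwise the maximal `r ≥ 0` such
that `|D - E| ≠ ∅` for every effective divisor `E` of degree `r`. -/
def rank (D : Γ.Divisor) : ℤ :=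
  sSup ({-1} ∪ {r : ℤ | 0 ≤ r ∧
    ∀ E : Γ.Divisor, Effective E → deg E = r → (linSys (D - E)).Nonempty})

/-- The set `A` has outgoing degree `m` at its boundary point `Q`: for every sufficiently
small star neighbourhood of `Q`, exactly `m` of the rays (segments) emanating from `Q`
leave `A`. -/
def OutDegEq (A : Set Γ.carrier) (Q : Γ.carrier) (m : ℕ) : Prop :=
  ∃ ρ₀ > (0:ℝ), ∀ ρ ∈ Ioc (0:ℝ) ρ₀, ∀ U ∈ nhds Q, ∀ φ,
    IsStarMap φ U Q (Γ.valence Q) ρ →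
      m = Nat.card {k : ℕ // k < Γ.valence Q ∧ ∀ t ∈ Ioc (0:ℝ) ρ, φ k t ∉ A}

/-- `D` is `P`-reduced: for every nonempty `S ⊆ Supp(D) \ {P}`, the complement of the
connected component of `Γ \ S` containing `P` has a non-saturated boundary point `Q`,
i.e. a boundary point `Q` with `D(Q)` strictly smaller than the outgoing degree at `Q`. -/
def Reduced (D : Γ.Divisor) (P : Γ.carrier) : Prop :=
  ∀ S : Set Γ.carrier, S.Nonempty → S ⊆ (D.support : Set Γ.carrier) \ {P} →
    ∃ Q ∈ frontier ((connectedComponentIn Sᶜ P)ᶜ),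
      ∃ m : ℕ, OutDegEq ((connectedComponentIn Sᶜ P)ᶜ) Q m ∧ D Q < (m : ℤ)

variable (Γ) in
/-- A spanning tree of `Γ`: a closed connected simply connected subset containing all
vertices which is the union of the vertex set and the closures of all but `genus Γ` of
the edges. -/
def IsSpanningTree (T : Set Γ.carrier) : Prop :=
  IsClosed T ∧ IsConnected T ∧ SimplyConnectedSpace T ∧ Γ.vertexSet ⊆ T ∧
  ∃ E' ⊆ Γ.edgeSet, ((Nat.card ↥(Γ.edgeSet \ E') : ℤ) = Γ.genus) ∧
    T = Γ.vertexSet ∪ ⋃ e ∈ E', closure e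

end MetricGraph

section StarHelpers

variable {X : Type} [MetricSpace X] {φ : ℕ → ℝ → X} {U : Set X} {P : X} {n : ℕ} {ρ : ℝ}

lemma IsStarMap.dist_center (hφ : IsStarMap φ U P n ρ) (hρ : 0 ≤ ρ)
    {k : ℕ} (hk : k < n) {t : ℝ} (ht : t ∈ Icc (0:ℝ) ρ) : dist (φ k t) P = t := by
  have h0 : (0:ℝ) ∈ Icc (0:ℝ) ρ := ⟨le_refl _, hρ⟩
  have h1 := hφ.2.1 k hk t ht 0 h0
  rw [hφ.1 k hk, sub_zero, abs_of_nonneg ht.1] at h1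
  exact h1

lemma IsStarMap.mem_ray_of_close (hφ : IsStarMap φ U P n ρ) (hρ : 0 ≤ ρ)
    {x : X} (hx : x ∈ U) : ∃ k < n, ∃ t ∈ Icc (0:ℝ) ρ, x = φ k t ∧ dist x P = t := by
  rw [hφ.2.2.2] at hx
  simp only [Set.mem_iUnion, Finset.mem_range] at hx
  obtain ⟨k, hk, t, ht, rfl⟩ := hx
  exact ⟨k, hk, t, ht, rfl, hφ.dist_center hρ hk ht⟩

lemma IsStarMap.subset_closedBall (hφ : IsStarMap φ U P n ρ) (hρ : 0 ≤ ρ) :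
    U ⊆ Metric.closedBall P ρ := by
  intro x hx
  obtain ⟨k, hk, t, ht, rfl, hd⟩ := hφ.mem_ray_of_close hρ hx
  simpa [Metric.mem_closedBall, hd] using ht.2

lemma IsStarMap.isPreconnected (hφ : IsStarMap φ U P n ρ) (hρ : 0 ≤ ρ) :
    IsPreconnected U := by
  apply isPreconnected_of_forall P
  intro y hy
  obtain ⟨k, hk, t, ht, rfl, -⟩ := hφ.mem_ray_of_close hρ hy
  refine ⟨φ k '' Icc (0:ℝ) ρ, ?_, ⟨0, ⟨le_refl _, hρ⟩, hφ.1 k hk⟩, ⟨t, ht, rfl⟩, ?_⟩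
  · rw [hφ.2.2.2]
    intro y hy
    simp only [Set.mem_iUnion, Finset.mem_range]
    exact ⟨k, hk, hy⟩
  · apply isPreconnected_Icc.image
    apply LipschitzOnWith.continuousOn (K := 1)
    apply LipschitzOnWith.of_dist_le_mul
    intro a ha b hb
    rw [hφ.2.1 k hk a ha b hb, NNReal.coe_one, one_mul, Real.dist_eq]

lemma IsStarMap.shrink (hφ : IsStarMap φ U P n ρ) (hU : U ∈ nhds P) {ρ' : ℝ}
    (h0 : 0 < ρ') (hle : ρ' ≤ ρ) :
    ∃ U' ∈ nhds P, IsStarMap φ U' P n ρ' := by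
  have hρ : (0:ℝ) ≤ ρ := le_trans h0.le hle
  refine ⟨⋃ k ∈ Finset.range n, φ k '' Icc (0:ℝ) ρ', ?_,
    hφ.1,
    fun k hk s hs t ht =>
      hφ.2.1 k hk s (Icc_subset_Icc_right hle hs) t (Icc_subset_Icc_right hle ht),
    fun k hk l hl hne s hs t ht =>
      hφ.2.2.1 k hk l hl hne s (Icc_subset_Icc_right hle hs) t (Icc_subset_Icc_right hle ht),
    rfl⟩
  obtain ⟨ε, hε, hball⟩ := Metric.mem_nhds_iff.1 hU
  refine Filter.mem_of_superset (Metric.ball_mem_nhds P (lt_min hε h0)) ?_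
  intro x hx
  have hxU : x ∈ U := hball (Metric.ball_subset_ball (min_le_left _ _) hx)
  obtain ⟨k, hk, t, ht, rfl, hd⟩ := hφ.mem_ray_of_close hρ hxU
  have htρ' : t < ρ' := by
    have := Metric.mem_ball.1 hx
    rw [hd] at this
    exact lt_of_lt_of_le this (min_le_right _ _)
  simp only [Set.mem_iUnion, Finset.mem_range]
  exact ⟨k, hk, t, ⟨ht.1, htρ'.le⟩, rfl⟩

end StarHelpers

open MetricGraph in
/-- If an effective divisor `D` on a metric graph `Γ` is `P`-reduced for every point
`P ∈ Γ`, then `|D| = {D}`. -/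
theorem linSys_eq_singleton_of_forall_reduced (Γ : MetricGraph) (D : Γ.Divisor)
    (hD : Effective D) (h : ∀ P : Γ.carrier, Reduced D P) :
    linSys D = {D} := by
  apply Set.Subset.antisymm
  · rintro D' ⟨hD', f, hf, hdiv⟩
    suffices hPD : ∀ P, D' P = D P by
      exact Set.mem_singleton_iff.2 (Finsupp.ext hPD)
    -- `f` attains its maximum value `M := f x₀` on the compact space `Γ`.
    obtain ⟨x₀, -, hx₀'⟩ := isCompact_univ.exists_isMaxOn (Set.univ_nonempty) hf.1.continuousOn
    have hx₀ : ∀ y, f y ≤ f x₀ := fun y => hx₀' (Set.mem_univ y)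
    by_cases hconst : ∀ x, f x = f x₀
    · -- constant case: all slopes vanish, so `D' - D = 0`.
      intro P
      obtain ⟨s, ⟨ρ, hρ, U, hU, φ, hφ, hsl⟩, hsum⟩ := hdiv P
      have hz : ∀ k ∈ Finset.range (Γ.valence P), s k = 0 := by
        intro k hk
        rw [Finset.mem_range] at hk
        have h1 := hsl k hk ρ ⟨hρ.le, le_refl _⟩
        rw [hconst (φ k ρ), hconst P] at h1
        have : (s k : ℝ) * ρ = 0 := by linarith
        rcases mul_eq_zero.1 this with h2 | h2
        · exact_mod_cast h2
        · exact absurd h2 (ne_of_gt hρ)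
      rw [Finset.sum_eq_zero hz, sub_eq_zero] at hsum
      exact hsum
    · -- non-constant case: derive a contradiction from reducedness.
      exfalso
      push_neg at hconst
      obtain ⟨P, hP⟩ := hconst
      have hPlt : f P < f x₀ := lt_of_le_of_ne (hx₀ P) hP
      set A : Set Γ.carrier := f ⁻¹' {f x₀} with hA_def
      have hA_closed : IsClosed A := isClosed_singleton.preimage hf.1
      have hx₀A : x₀ ∈ A := rfl
      have hPA : P ∉ A := by
        simp only [hA_def, Set.mem_preimage, Set.mem_singleton_iff]
        exact hP
      set S : Set Γ.carrier := frontier A with hS_def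
      have hS_closed : IsClosed S := isClosed_frontier
      have hS_ne : S.Nonempty := by
        rcases Set.eq_empty_or_nonempty S with hS | hS
        · exfalso
          have hclopen : IsClopen A := isClopen_iff_frontier_eq_empty.2 hS
          rcases isClopen_iff.1 hclopen with hA | hA
          · exact absurd (hA ▸ hx₀A) (Set.notMem_empty x₀)
          · exact hPA (hA ▸ Set.mem_univ P)
        · exact hS
      have hSA : S ⊆ A := hA_closed.frontier_subset
      -- Every point of `S = frontier A` carries at least one chip of `D`.
      have hDS : ∀ Q ∈ S, 1 ≤ D Q := by
        intro Q hQ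
        have hfQ : f Q = f x₀ := hSA hQ
        obtain ⟨s, ⟨ρ, hρ, U, hU, φ, hφ, hsl⟩, hsum⟩ := hdiv Q
        -- all slopes at a max point are ≤ 0
        have hs0 : ∀ k < Γ.valence Q, s k ≤ 0 := by
          intro k hk
          have h1 := hsl k hk ρ ⟨hρ.le, le_refl _⟩
          have h2 : f (φ k ρ) ≤ f x₀ := hx₀ _
          rw [h1, hfQ] at h2
          by_contra hpos
          push_neg at hpos
          nlinarith [show (0:ℝ) < (s k : ℝ) from by exact_mod_cast hpos]
        -- some direction leaves `A`, so some slope is ≤ -1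
        obtain ⟨ε, hε, hball⟩ := Metric.mem_nhds_iff.1 hU
        have hQfr : Q ∈ closure Aᶜ := by rw [closure_compl]; exact hQ.2
        obtain ⟨x, hxball, hxA⟩ := mem_closure_iff_nhds.1 hQfr _
          (Metric.ball_mem_nhds Q (lt_min hε hρ))
        have hxU : x ∈ U := hball (Metric.ball_subset_ball (min_le_left _ _) hxball)
        obtain ⟨k, hk, t, ht, rfl, hd⟩ := hφ.mem_ray_of_close hρ.le hxU
        have htpos : 0 < t := by
          rcases lt_or_eq_of_le ht.1 with h1 | h1
          · exact h1
          · exfalso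
            apply hxA
            have : φ k t = Q := by rw [← h1, hφ.1 k hk]
            simp only [hA_def, Set.mem_preimage, Set.mem_singleton_iff, this, hfQ]
        have hfx : f (φ k t) < f x₀ :=
          lt_of_le_of_ne (hx₀ _) (by simpa [hA_def, Set.mem_preimage] using hxA)
        have hskneg : s k ≤ -1 := by
          have h1 := hsl k hk t ht
          rw [h1, hfQ] at hfx
          have : (s k : ℝ) * t < 0 := by linarith
          have hsk : (s k : ℝ) < 0 := by
            by_contra hc
            push_neg at hc
            nlinarith
          have : s k < 0 := by exact_mod_cast hsk
          omega
        -- sum the slopes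
        have hsums : ∑ j ∈ Finset.range (Γ.valence Q), s j ≤ -1 := by
          have hkmem : k ∈ Finset.range (Γ.valence Q) := Finset.mem_range.2 hk
          calc ∑ j ∈ Finset.range (Γ.valence Q), s j
              = s k + ∑ j ∈ (Finset.range (Γ.valence Q)).erase k, s j :=
                (Finset.add_sum_erase _ _ hkmem).symm
            _ ≤ -1 + 0 := by
                gcongr
                apply Finset.sum_nonpos
                intro j hj
                exact hs0 j (Finset.mem_range.1 (Finset.mem_of_mem_erase hj))
            _ = -1 := by ring
        have := hD' Q
        omega
      have hSsub : S ⊆ (D.support : Set Γ.carrier) \ {P} := by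
        intro Q hQ
        refine ⟨Finsupp.mem_support_iff.2 ?_, ?_⟩
        · have := hDS Q hQ; omega
        · intro hQP
          rw [Set.mem_singleton_iff] at hQP
          subst hQP
          exact absurd (hSA hQ) hPA
      -- apply reducedness at `P`
      obtain ⟨Q₀, hQ₀fr, m, hOut, hDQm⟩ := h P S hS_ne hSsub
      set U₀ : Set Γ.carrier := connectedComponentIn Sᶜ P with hU₀_def
      have hPU₀ : P ∈ U₀ := mem_connectedComponentIn (by
        simp only [Set.mem_compl_iff]
        intro hPS
        exact absurd (hSA hPS) hPA)
      have hU₀pre : IsPreconnected U₀ := isPreconnected_connectedComponentIn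
      have hU₀S : U₀ ⊆ Sᶜ := connectedComponentIn_subset _ _
      -- `U₀` is disjoint from the maximum set `A`
      have hU₀A : ∀ x ∈ U₀, x ∉ A := by
        intro x hxU₀ hxA
        have hxint : x ∈ interior A := by
          by_contra hxint
          apply hU₀S hxU₀
          show x ∈ S
          rw [hS_def, frontier]
          exact ⟨subset_closure hxA, hxint⟩
        rcases hU₀pre (interior A) Aᶜ isOpen_interior hA_closed.isOpen_compl
          (fun y hy => by
            by_cases hyA : y ∈ A
            · left
              by_contra hyint
              apply hU₀S hy
              show y ∈ S
              rw [hS_def, frontier]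
              exact ⟨subset_closure hyA, hyint⟩
            · exact Or.inr hyA)
          ⟨x, hxU₀, hxint⟩ ⟨P, hPU₀, hPA⟩ with ⟨y, -, hy1, hy2⟩
        exact hy2 (interior_subset hy1)
      -- the boundary point `Q₀` provided by reducedness lies in `S`
      have hQ₀S : Q₀ ∈ S := by
        by_contra hQS
        rw [frontier_compl] at hQ₀fr
        -- take a small connected star neighbourhood of `Q₀` inside `Sᶜ`
        obtain ⟨ρ₁, hρ₁, V, hV, ψ, hψ⟩ := Γ.isStar Q₀
        have hScomp : Sᶜ ∈ nhds Q₀ := hS_closed.isOpen_compl.mem_nhds hQS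
        obtain ⟨ε, hε, hball⟩ := Metric.mem_nhds_iff.1 hScomp
        set ρ₂ : ℝ := min ρ₁ (ε / 2) with hρ₂_def
        have hρ₂pos : 0 < ρ₂ := lt_min hρ₁ (by linarith)
        obtain ⟨V', hV'nhds, hψ'⟩ := hψ.shrink hV hρ₂pos (min_le_left _ _)
        have hV'S : V' ⊆ Sᶜ := fun x hx => hball (by
          have := hψ'.subset_closedBall hρ₂pos.le hx
          rw [Metric.mem_closedBall] at this
          rw [Metric.mem_ball]
          calc dist x Q₀ ≤ ρ₂ := this
            _ ≤ ε / 2 := min_le_right _ _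
            _ < ε := by linarith)
        have hV'pre : IsPreconnected V' := hψ'.isPreconnected hρ₂pos.le
        obtain ⟨x, hxV', hxU₀⟩ := mem_closure_iff_nhds.1 hQ₀fr.1 V' hV'nhds
        have hunion : IsPreconnected (V' ∪ U₀) :=
          IsPreconnected.union x hxV' hxU₀ hV'pre hU₀pre
        have hsub : V' ∪ U₀ ⊆ U₀ :=
          hunion.subset_connectedComponentIn (Set.mem_union_right _ hPU₀)
            (Set.union_subset hV'S hU₀S)
        have : U₀ ∈ nhds Q₀ :=
          Filter.mem_of_superset hV'nhds (fun y hy => hsub (Set.mem_union_left _ hy))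
        have hQint : Q₀ ∈ interior U₀ := mem_interior_iff_mem_nhds.2 this
        exact hQ₀fr.2 hQint
      have hfQ₀ : f Q₀ = f x₀ := hSA hQ₀S
      -- slope data at Q₀
      obtain ⟨s, ⟨ρ, hρ, U, hU, φ, hφ, hsl⟩, hsum⟩ := hdiv Q₀
      have hs0 : ∀ k < Γ.valence Q₀, s k ≤ 0 := by
        intro k hk
        have h1 := hsl k hk ρ ⟨hρ.le, le_refl _⟩
        have h2 : f (φ k ρ) ≤ f x₀ := hx₀ _
        rw [h1, hfQ₀] at h2
        by_contra hpos
        push_neg at hpos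
        nlinarith [show (0:ℝ) < (s k : ℝ) from by exact_mod_cast hpos]
      -- apply the outgoing degree hypothesis with a shrunk star
      obtain ⟨ρ₀, hρ₀, hOut'⟩ := hOut
      set ρ' : ℝ := min ρ ρ₀ with hρ'_def
      have hρ'pos : 0 < ρ' := lt_min hρ hρ₀
      obtain ⟨U', hU'nhds, hφ'⟩ := hφ.shrink hU hρ'pos (min_le_left _ _)
      have hm := hOut' ρ' ⟨hρ'pos, min_le_right _ _⟩ U' hU'nhds φ hφ'
      -- rays counted by `m` have slope ≤ -1
      have hray : ∀ k, k < Γ.valence Q₀ → (∀ t ∈ Ioc (0:ℝ) ρ', φ k t ∉ U₀ᶜ) →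
          s k ≤ -1 := by
        intro k hk hkray
        have hs0k := hs0 k hk
        rcases lt_or_eq_of_le hs0k with h1 | h1
        · omega
        · exfalso
          have hfk : f (φ k ρ') = f x₀ := by
            have := hsl k hk ρ' ⟨hρ'pos.le, min_le_left _ _⟩
            rw [this, hfQ₀, h1]
            push_cast
            ring
          have hmem : φ k ρ' ∈ A := by
            simp only [hA_def, Set.mem_preimage, Set.mem_singleton_iff, hfk]
          have hU₀mem : φ k ρ' ∈ U₀ := by
            have := hkray ρ' ⟨hρ'pos, le_refl _⟩
            simpa using this
          exact hU₀A _ hU₀mem hmem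
      -- count: m ≤ #{k | s k ≤ -1}
      classical
      set T : Finset ℕ := (Finset.range (Γ.valence Q₀)).filter (fun k => s k ≤ -1) with hT_def
      have hmT : m ≤ T.card := by
        rw [hm, ← Nat.card_eq_finsetCard]
        apply Nat.card_le_card_of_injective
          (fun x => (⟨x.1, by
            obtain ⟨hk, hr⟩ := x.2
            simp only [hT_def, Finset.mem_filter, Finset.mem_range]
            exact ⟨hk, hray x.1 hk hr⟩⟩ : {y // y ∈ T}))
        intro a b hab
        simpa [Subtype.ext_iff] using hab
      -- sum of slopes ≤ -m
      have hsumneg : ∑ k ∈ Finset.range (Γ.valence Q₀), s k ≤ -(m : ℤ) := by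
        calc ∑ k ∈ Finset.range (Γ.valence Q₀), s k
            = ∑ k ∈ T, s k + ∑ k ∈ (Finset.range (Γ.valence Q₀)).filter (fun k => ¬ s k ≤ -1), s k := by
              rw [hT_def, Finset.sum_filter_add_sum_filter_not]
          _ ≤ ∑ k ∈ T, s k + 0 := by
              gcongr
              apply Finset.sum_nonpos
              intro j hj
              rw [Finset.mem_filter, Finset.mem_range] at hj
              exact hs0 j hj.1
          _ = ∑ k ∈ T, s k := by ring
          _ ≤ ∑ k ∈ T, (-1 : ℤ) := by
              apply Finset.sum_le_sum
              intro j hj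
              rw [hT_def, Finset.mem_filter] at hj
              exact hj.2
          _ = -(T.card : ℤ) := by simp
          _ ≤ -(m : ℤ) := by
              have : (m : ℤ) ≤ (T.card : ℤ) := by exact_mod_cast hmT
              omega
      have hD'Q₀ := hD' Q₀
      omega
  · rintro D' rfl
    refine ⟨hD, fun _ => 0, ⟨continuous_const, ?_⟩, ?_⟩
    · intro P
      obtain ⟨ρ, hρ, U, hU, φ, hφ⟩ := Γ.isStar P
      exact ⟨fun _ => 0, ρ, hρ, U, hU, φ, hφ, fun k hk t ht => by simp⟩
    · intro P
      obtain ⟨ρ, hρ, U, hU, φ, hφ⟩ := Γ.isStar P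
      exact ⟨fun _ => 0, ⟨ρ, hρ, U, hU, φ, hφ, fun k hk t ht => by simp⟩, by simp⟩
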